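/- For any finite simple graph G on n ≥ 2 vertices, there exists a family of at most n-1 vertex subsets V₁,…,V_d ⊆ V(G) such that the edge set of G equals the symmetric difference of the edge sets of the complete graphs on the V_i (i.e., an edge {u,v} is in G iff {u,v} ⊆ V_i for an odd number of indices i). -/

import Mathlib

open Finset

set_option maxHeartbeats 1000000 in

private lemma aux_scs (n : ℕ) (A : Finset (Fin n)) :
    ∀ (G : SimpleGraph (Fin n)), (∀ u v, G.Adj u v → u ∈ A ∧ v ∈ A) →
    ∃ d : ℕ, d ≤ A.card - 1 ∧ ∃ S : Fin d → Finset (Fin n),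
      ∀ u v : Fin n, u ≠ v →
        (G.Adj u v ↔
          Odd ((Finset.univ.filter (fun i : Fin d => u ∈ S i ∧ v ∈ S i)).card)) := by
  induction A using Finset.strongInductionOn with
  | _ A ih =>
    intro G hG
    by_cases hA : A.card ≤ 1
    · -- G is empty
      refine ⟨0, by omega, ⟨fun i => ∅, ?_⟩⟩
      intro u v huv
      have hodd : ¬ Odd ((Finset.univ.filter
          (fun i : Fin 0 => u ∈ (∅ : Finset (Fin n)) ∧ v ∈ (∅ : Finset (Fin n)))).card) := by
        simp
      constructor
      · intro hadj
        have h1 := hG u v hadj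
        have : 1 < A.card := Finset.one_lt_card.mpr ⟨u, h1.1, v, h1.2, huv⟩
        omega
      · intro h; exact absurd h hodd
    · push_neg at hA
      obtain ⟨u, hu⟩ : A.Nonempty := Finset.card_pos.mp (by omega)
      classical
      set T : Finset (Fin n) := insert u (G.neighborFinset u) with hT
      -- the complemented graph
      set G' : SimpleGraph (Fin n) :=
        { Adj := fun v w => v ≠ w ∧ ¬(G.Adj v w ↔ (v ∈ T ∧ w ∈ T))
          symm := by
            constructor
            intro v w ⟨h1, h2⟩
            refine ⟨h1.symm, ?_⟩
            rw [G.adj_comm]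
            tauto
          loopless := ⟨fun v h => h.1 rfl⟩ } with hG'
      have hAdj' : ∀ v w, G'.Adj v w ↔ (v ≠ w ∧ ¬(G.Adj v w ↔ (v ∈ T ∧ w ∈ T))) := by
        intro v w; rfl
      have hTmem : ∀ w, w ∈ T ↔ (w = u ∨ G.Adj u w) := by
        intro w; simp [hT]
      -- row u of G' is zero
      have hrow : ∀ w, ¬ G'.Adj u w := by
        intro w hw
        rw [hAdj'] at hw
        obtain ⟨hne, hx⟩ := hw
        apply hx
        have huT : u ∈ T := by simp [hT]
        have : w ∈ T ↔ G.Adj u w := by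
          rw [hTmem]
          constructor
          · rintro (rfl | h)
            · exact absurd rfl hne
            · exact h
          · exact Or.inr
        tauto
      have hrow' : ∀ v, ¬ G'.Adj v u := fun v hv => hrow v hv.symm
      -- edges of G' live in A.erase u
      have hG'A : ∀ v w, G'.Adj v w → v ∈ A.erase u ∧ w ∈ A.erase u := by
        intro v w hvw
        have hvu : v ≠ u := fun h => hrow w (h ▸ hvw)
        have hwu : w ≠ u := fun h => hrow v (h ▸ hvw.symm)
        rw [hAdj'] at hvw
        obtain ⟨hne, hx⟩ := hvw
        have hmemA : ∀ z, z ≠ u → z ∈ T → z ∈ A := by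
          intro z hz hzT
          rw [hTmem] at hzT
          rcases hzT with rfl | h
          · exact absurd rfl hz
          · exact (hG u z h).2
        by_cases hadj : G.Adj v w
        · exact ⟨Finset.mem_erase.mpr ⟨hvu, (hG v w hadj).1⟩,
            Finset.mem_erase.mpr ⟨hwu, (hG v w hadj).2⟩⟩
        · have hC : v ∈ T ∧ w ∈ T := by tauto
          exact ⟨Finset.mem_erase.mpr ⟨hvu, hmemA v hvu hC.1⟩,
            Finset.mem_erase.mpr ⟨hwu, hmemA w hwu hC.2⟩⟩
      have hsub : A.erase u ⊂ A := Finset.erase_ssubset hu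
      obtain ⟨d', hd', S', hS'⟩ := ih (A.erase u) hsub G' hG'A
      have hcard : (A.erase u).card = A.card - 1 := Finset.card_erase_of_mem hu
      set S'' : Fin (d' + 1) → Finset (Fin n) := Fin.cons T S' with hS''
      refine ⟨d' + 1, by omega, S'', ?_⟩
      intro v w hvw
      have hG'vw := hS' v w hvw
      have hG'iff : G'.Adj v w ↔ ¬(G.Adj v w ↔ (v ∈ T ∧ w ∈ T)) := by
        rw [hAdj']; tauto
      by_cases hC : v ∈ T ∧ w ∈ T
      · have hcnt1 : (Finset.univ.filter
            (fun i : Fin (d' + 1) => v ∈ S'' i ∧ w ∈ S'' i)).card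
            = (Finset.univ.filter (fun i : Fin d' => v ∈ S' i ∧ w ∈ S' i)).card + 1 := by
          rw [Finset.card_filter, Finset.card_filter, Fin.sum_univ_succ]
          simp [hS'', hC.1, hC.2, add_comm]
        rw [hcnt1, Nat.odd_add_one, ← hG'vw, hG'iff]
        tauto
      · have hcnt2 : (Finset.univ.filter
            (fun i : Fin (d' + 1) => v ∈ S'' i ∧ w ∈ S'' i)).card
            = (Finset.univ.filter (fun i : Fin d' => v ∈ S' i ∧ w ∈ S' i)).card := by
          rw [Finset.card_filter, Finset.card_filter, Fin.sum_univ_succ]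
          simp [hS'', hC]
        have key : G.Adj v w ↔ G'.Adj v w := by
          constructor
          · intro h
            exact (hAdj' v w).mpr ⟨hvw, fun hiff => hC (hiff.mp h)⟩
          · intro h
            obtain ⟨-, hx⟩ := (hAdj' v w).mp h
            by_contra hna
            exact hx (iff_of_false hna hC)
        rw [hcnt2]
        exact key.trans hG'vw

theorem exists_subgraph_complementation_system (n : ℕ) (hn : 2 ≤ n)
    (G : SimpleGraph (Fin n)) :
    ∃ d : ℕ, d ≤ n - 1 ∧ ∃ S : Fin d → Finset (Fin n),
      ∀ u v : Fin n, u ≠ v →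
        (G.Adj u v ↔
          Odd ((Finset.univ.filter (fun i : Fin d => u ∈ S i ∧ v ∈ S i)).card)) := by
  obtain ⟨d, hd, S, hS⟩ :=
    aux_scs n Finset.univ G (fun u v _ => ⟨Finset.mem_univ u, Finset.mem_univ v⟩)
  exact ⟨d, by simpa [Finset.card_fin] using hd, S, hS⟩
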